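/- arXiv:1301.6339 — 5 statements merged into one kernel-verified Lean document; each statement's English description precedes it below -/
import Mathlib

section
/- Let X and Y be nonempty finite sets and let W be a classical channel from X to Y, i.e., W(y|x) ≥ 0 and ∑_{y∈Y} W(y|x) = 1 for every x ∈ X. Fix ρ > 0 and set α = 1/(1+ρ). Then the maximum over all probability distributions P on X of (1/ρ)·(−log ∑_{y∈Y} (∑_{x∈X} P(x) W(y|x)^α)^{1/α}) equals the minimum over all probability distributions Q on Y of max_{x∈X} (1/(α−1))·log ∑_{y∈Y} W(y|x)^α Q(y)^{1−α}, the equality being understood in the extended nonnegative reals [0,∞], and both extrema are attained. -/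
open scoped ENNReal

/-- `-log r` as an extended nonnegative real, `+∞` when `r ≤ 0`. -/
noncomputable def negLog (r : ℝ) : ℝ≥0∞ :=
  if r ≤ 0 then ⊤ else ENNReal.ofReal (-Real.log r)

/-- `(α - 1)⁻¹ · log r` as an extended nonnegative real, `+∞` when `r ≤ 0`. -/
noncomputable def renyiTerm (α r : ℝ) : ℝ≥0∞ :=
  if r ≤ 0 then ⊤ else ENNReal.ofReal ((α - 1)⁻¹ * Real.log r)

lemma csz_holder {ι : Type*} (s : Finset ι) {α : ℝ} (hα0 : 0 < α) (hα1 : α < 1)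
    (u v : ι → ℝ) (hu : ∀ i, 0 ≤ u i) (hv : ∀ i, 0 ≤ v i) :
    ∑ i ∈ s, u i ^ α * v i ^ (1 - α) ≤ (∑ i ∈ s, u i) ^ α * (∑ i ∈ s, v i) ^ (1 - α) := by
  have h1α : (0:ℝ) < 1 - α := by linarith
  have hpq : (1/α).HolderConjugate (1/(1-α)) := by
    rw [Real.holderConjugate_iff]
    constructor
    · rw [lt_div_iff₀ hα0, one_mul]; exact hα1
    · rw [one_div, one_div, inv_inv, inv_inv]; ring
  have h := Real.inner_le_Lp_mul_Lq s (fun i => u i ^ α) (fun i => v i ^ (1-α)) hpq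
  have e1 : ∀ i, |u i ^ α| ^ (1/α) = u i := by
    intro i
    rw [abs_of_nonneg (Real.rpow_nonneg (hu i) _), ← Real.rpow_mul (hu i),
      mul_one_div, div_self hα0.ne', Real.rpow_one]
  have e2 : ∀ i, |v i ^ (1-α)| ^ (1/(1-α)) = v i := by
    intro i
    rw [abs_of_nonneg (Real.rpow_nonneg (hv i) _), ← Real.rpow_mul (hv i),
      mul_one_div, div_self h1α.ne', Real.rpow_one]
  simp only [e1, e2] at h
  rwa [one_div_one_div, one_div_one_div] at h

lemma csz_grad {a c p : ℝ} (ha : 0 ≤ a) (hc : 0 ≤ c) (hp : 1 < p) :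
    c ^ p + p * c ^ (p - 1) * (a - c) ≤ a ^ p := by
  rcases eq_or_lt_of_le hc with h0 | h0
  · rw [← h0, Real.zero_rpow (by positivity : p ≠ 0),
      Real.zero_rpow (by intro h; nlinarith [h] : p - 1 ≠ 0)]
    simpa using Real.rpow_nonneg ha p
  · have hs : (-1:ℝ) ≤ a/c - 1 := by
      have : 0 ≤ a / c := div_nonneg ha h0.le
      linarith
    have hb := one_add_mul_self_le_rpow_one_add hs hp.le
    have h1 : (1 + (a/c - 1)) = a / c := by ring
    rw [h1, Real.div_rpow ha h0.le] at hb
    have hcp : 0 < c ^ p := Real.rpow_pos_of_pos h0 _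
    have h2 : (1 + p * (a/c - 1)) * c ^ p ≤ a ^ p := by
      calc (1 + p*(a/c-1)) * c^p ≤ (a^p / c^p) * c^p :=
            mul_le_mul_of_nonneg_right hb hcp.le
        _ = a ^ p := div_mul_cancel₀ _ hcp.ne'
    have h3 : c ^ (p-1) = c ^ p / c := by rw [Real.rpow_sub h0, Real.rpow_one]
    rw [h3]
    have hcne : c ≠ 0 := h0.ne'
    calc c^p + p * (c^p / c) * (a - c) = (1 + p * (a/c - 1)) * c^p := by
          field_simp
      _ ≤ a ^ p := h2

/-- Csiszár's identity: `E₀(ρ)/ρ = min_Q max_x D_α(W(·|x)‖Q)` with `α = 1/(1+ρ)`,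
both extrema attained. Powers are `Real.rpow`, so `0 ^ α = 0` for `α ∈ (0,1)`. -/
theorem stmt1 {X Y : Type*} [Fintype X] [Nonempty X] [Fintype Y] [Nonempty Y]
    (W : X → Y → ℝ) (hW : ∀ x y, 0 ≤ W x y) (hW1 : ∀ x, ∑ y, W x y = 1)
    (ρ : ℝ) (hρ : 0 < ρ) (α : ℝ) (hα : α = 1 / (1 + ρ)) :
    ∃ (P : X → ℝ) (Q : Y → ℝ),
      (∀ x, 0 ≤ P x) ∧ (∑ x, P x = 1) ∧ (∀ y, 0 ≤ Q y) ∧ (∑ y, Q y = 1) ∧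
      (∀ P' : X → ℝ, (∀ x, 0 ≤ P' x) → (∑ x, P' x = 1) →
        ENNReal.ofReal (1 / ρ) *
            negLog (∑ y, (∑ x, P' x * W x y ^ α) ^ (1 / α)) ≤
          ENNReal.ofReal (1 / ρ) *
            negLog (∑ y, (∑ x, P x * W x y ^ α) ^ (1 / α))) ∧
      (∀ Q' : Y → ℝ, (∀ y, 0 ≤ Q' y) → (∑ y, Q' y = 1) →
        (⨆ x, renyiTerm α (∑ y, W x y ^ α * Q y ^ (1 - α))) ≤
          ⨆ x, renyiTerm α (∑ y, W x y ^ α * Q' y ^ (1 - α))) ∧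
      ENNReal.ofReal (1 / ρ) *
          negLog (∑ y, (∑ x, P x * W x y ^ α) ^ (1 / α)) =
        ⨆ x, renyiTerm α (∑ y, W x y ^ α * Q y ^ (1 - α)) := by
  classical
  have h1ρ : (0:ℝ) < 1 + ρ := by linarith
  have hα0 : 0 < α := by rw [hα]; positivity
  have hα1 : α < 1 := by rw [hα, div_lt_one h1ρ]; linarith
  have hαne : α ≠ 0 := hα0.ne'
  have hp1 : 1 < 1/α := by rw [lt_div_iff₀ hα0, one_mul]; exact hα1
  have hαm1 : (α - 1)⁻¹ ≤ 0 := inv_nonpos.2 (by linarith)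
  have h_ratio : (α - 1)⁻¹ * α = -(1/ρ) := by
    rw [hα]; field_simp; ring_nf; simp [hρ.ne']
  -- continuity of the E0 objective
  have hrpow_cont : Continuous fun r : ℝ => r ^ (1/α) :=
    continuous_iff_continuousAt.2 fun z =>
      Real.continuousAt_rpow_const z _ (Or.inr (by positivity))
  have hFcont : Continuous fun P' : X → ℝ => ∑ y, (∑ x, P' x * W x y ^ α) ^ (1/α) := by
    apply continuous_finset_sum
    intro y _
    exact hrpow_cont.comp
      (continuous_finset_sum _ fun x _ => (continuous_apply x).mul continuous_const)
  have hSne : (stdSimplex ℝ X).Nonempty := by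
    refine ⟨fun _ => (Fintype.card X : ℝ)⁻¹, fun _ => by positivity, ?_⟩
    have hc : (0:ℝ) < (Fintype.card X : ℝ) := by
      have := Fintype.card_pos (α := X); exact_mod_cast this
    rw [Finset.sum_const, nsmul_eq_mul, Finset.card_univ]
    field_simp
  obtain ⟨P, hPmem, hPmin⟩ :=
    (isCompact_stdSimplex ℝ X).exists_isMinOn hSne hFcont.continuousOn
  obtain ⟨hP0, hP1⟩ := hPmem
  have hPmin' : ∀ P' : X → ℝ, (∀ x, 0 ≤ P' x) → (∑ x, P' x = 1) →
      (∑ y, (∑ x, P x * W x y ^ α) ^ (1/α)) ≤ ∑ y, (∑ x, P' x * W x y ^ α) ^ (1/α) :=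
    fun P' h0 h1 => hPmin (⟨h0, h1⟩ : P' ∈ stdSimplex ℝ X)
  -- positivity on the simplex
  have hFpos : ∀ P' : X → ℝ, (∀ x, 0 ≤ P' x) → (∑ x, P' x = 1) →
      0 < ∑ y, (∑ x, P' x * W x y ^ α) ^ (1/α) := by
    intro P' h0 h1s
    have hx : ∃ x, 0 < P' x := by
      by_contra h; push_neg at h
      have h2 : ∑ x, P' x = 0 :=
        Finset.sum_eq_zero fun x _ => le_antisymm (h x) (h0 x)
      rw [h2] at h1s; norm_num at h1s
    obtain ⟨x0, hx0⟩ := hx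
    have hy : ∃ y, 0 < W x0 y := by
      by_contra h; push_neg at h
      have h2 : ∑ y, W x0 y = 0 :=
        Finset.sum_eq_zero fun y _ => le_antisymm (h y) (hW x0 y)
      rw [hW1 x0] at h2; norm_num at h2
    obtain ⟨y0, hy0⟩ := hy
    apply Finset.sum_pos'
    · intro y _
      exact Real.rpow_nonneg (Finset.sum_nonneg fun x _ =>
        mul_nonneg (h0 x) (Real.rpow_nonneg (hW x y) _)) _
    · refine ⟨y0, Finset.mem_univ _, Real.rpow_pos_of_pos ?_ _⟩
      apply Finset.sum_pos' (fun x _ => mul_nonneg (h0 x) (Real.rpow_nonneg (hW x y0) _))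
      exact ⟨x0, Finset.mem_univ _, mul_pos hx0 (Real.rpow_pos_of_pos hy0 _)⟩
  have ha0 : ∀ y, 0 ≤ ∑ x, P x * W x y ^ α := fun y =>
    Finset.sum_nonneg fun x _ => mul_nonneg (hP0 x) (Real.rpow_nonneg (hW x y) _)
  have hf0pos : 0 < ∑ y, (∑ x, P x * W x y ^ α) ^ (1/α) := hFpos P hP0 hP1
  -- KKT condition
  have hb : ∀ x, (∑ y, (∑ x', P x' * W x' y ^ α) ^ (1/α)) ≤
      ∑ y, W x y ^ α * (∑ x', P x' * W x' y ^ α) ^ (1/α - 1) := by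
    intro x
    set a : Y → ℝ := fun y => ∑ x', P x' * W x' y ^ α with ha_def
    set w : Y → ℝ := fun y => W x y ^ α with hw_def
    have ha0' : ∀ y, 0 ≤ a y := by
      intro y; rw [ha_def]; exact ha0 y
    have hw0 : ∀ y, 0 ≤ w y := by
      intro y; rw [hw_def]; exact Real.rpow_nonneg (hW x y) α
    have haa : ∀ y, a y ^ (1/α - 1) * a y = a y ^ (1/α) := by
      intro y
      rcases eq_or_lt_of_le (ha0' y) with h0 | h0
      · rw [← h0, Real.zero_rpow (by positivity : (1:ℝ)/α ≠ 0),
          Real.zero_rpow (by nlinarith [hp1] : (1:ℝ)/α - 1 ≠ 0), mul_zero]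
      · have h := Real.rpow_add h0 (1/α - 1) 1
        rw [Real.rpow_one] at h
        rw [← h]; congr 1; ring
    set G : ℝ → ℝ := fun t => ∑ y, ((1-t) * a y + t * w y) ^ (1/α - 1) * (w y - a y)
      with hG_def
    have hGcont : Continuous G := by
      rw [hG_def]
      apply continuous_finset_sum
      intro y _
      have h2 : Continuous fun r : ℝ => r ^ (1/α - 1) :=
        continuous_iff_continuousAt.2 fun z =>
          Real.continuousAt_rpow_const z _ (Or.inr (by nlinarith [hp1]))
      have h1 : Continuous fun t : ℝ => (1-t) * a y + t * w y :=
        ((continuous_const.sub continuous_id).mul continuous_const).add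
          (continuous_id.mul continuous_const)
      exact (h2.comp h1).mul continuous_const
    have hGnn : ∀ t ∈ Set.Ioc (0:ℝ) 1, 0 ≤ G t := by
      rintro t ⟨ht0, ht1⟩
      have hcy0 : ∀ y, 0 ≤ (1-t) * a y + t * w y := fun y =>
        add_nonneg (mul_nonneg (by linarith) (ha0' y)) (mul_nonneg ht0.le (hw0 y))
      -- the perturbed distribution
      have hPt0 : ∀ x', 0 ≤ (1-t) * P x' + t * (if x' = x then 1 else 0) := by
        intro x'
        have h1 : (0:ℝ) ≤ if x' = x then 1 else 0 := by split_ifs <;> norm_num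
        exact add_nonneg (mul_nonneg (by linarith) (hP0 x')) (mul_nonneg ht0.le h1)
      have hPt1 : ∑ x', ((1-t) * P x' + t * (if x' = x then 1 else 0)) = 1 := by
        rw [Finset.sum_add_distrib, ← Finset.mul_sum, ← Finset.mul_sum, hP1,
          Finset.sum_ite_eq' Finset.univ x (fun _ => (1:ℝ))]
        simp
      have hc : ∀ y, (∑ x', ((1-t) * P x' + t * (if x' = x then 1 else 0)) * W x' y ^ α)
          = (1-t) * a y + t * w y := by
        intro y
        rw [ha_def, hw_def]
        simp only [add_mul]
        rw [Finset.sum_add_distrib]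
        congr 1
        · rw [Finset.mul_sum]
          exact Finset.sum_congr rfl fun x' _ => by ring
        · have h3 : ∀ x', t * (if x' = x then (1:ℝ) else 0) * W x' y ^ α
              = if x' = x then t * W x' y ^ α else 0 := by
            intro x'; split_ifs <;> ring
          rw [Finset.sum_congr rfl fun x' _ => h3 x',
            Finset.sum_ite_eq' Finset.univ x (fun x' => t * W x' y ^ α)]
          simp
      have hFPt : (∑ y, a y ^ (1/α)) ≤ ∑ y, ((1-t) * a y + t * w y) ^ (1/α) := by
        have h4 := hPmin' _ hPt0 hPt1
        calc (∑ y, a y ^ (1/α)) = ∑ y, (∑ x', P x' * W x' y ^ α) ^ (1/α) := by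
              rw [ha_def]
          _ ≤ ∑ y, (∑ x', ((1-t) * P x' + t * (if x' = x then 1 else 0)) * W x' y ^ α)
              ^ (1/α) := h4
          _ = ∑ y, ((1-t) * a y + t * w y) ^ (1/α) :=
              Finset.sum_congr rfl fun y _ => by rw [hc y]
      have hgr : ∀ y ∈ Finset.univ,
          ((1-t) * a y + t * w y) ^ (1/α)
            + (1/α) * ((1-t) * a y + t * w y) ^ (1/α - 1) * (t * (a y - w y))
          ≤ a y ^ (1/α) := by
        intro y _
        have h := csz_grad (ha0' y) (hcy0 y) hp1
        have h5 : a y - ((1-t) * a y + t * w y) = t * (a y - w y) := by ring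
        rwa [h5] at h
      have hsum := Finset.sum_le_sum hgr
      rw [Finset.sum_add_distrib] at hsum
      have h8 : ∑ y, (1/α) * ((1-t) * a y + t * w y) ^ (1/α - 1) * (t * (a y - w y))
          = ((1/α) * t) * ∑ y, ((1-t) * a y + t * w y) ^ (1/α - 1) * (a y - w y) := by
        rw [Finset.mul_sum]
        exact Finset.sum_congr rfl fun y _ => by ring
      have hS : (∑ y, ((1-t) * a y + t * w y) ^ (1/α - 1) * (a y - w y)) ≤ 0 := by
        have hpt : (0:ℝ) < (1/α) * t := by positivity
        by_contra hcon
        push_neg at hcon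
        have h9 := mul_pos hpt hcon
        rw [← h8] at h9
        linarith
      have hGS : G t = -∑ y, ((1-t) * a y + t * w y) ^ (1/α - 1) * (a y - w y) := by
        rw [hG_def, ← Finset.sum_neg_distrib]
        exact Finset.sum_congr rfl fun y _ => by ring
      rw [hGS]; linarith
    have htend : Filter.Tendsto G (nhdsWithin 0 (Set.Ioi 0)) (nhds (G 0)) :=
      hGcont.continuousAt.continuousWithinAt
    have hev : ∀ᶠ t in nhdsWithin (0:ℝ) (Set.Ioi 0), 0 ≤ G t := by
      filter_upwards [Ioc_mem_nhdsGT_of_mem (Set.mem_Ico.2 ⟨le_refl (0:ℝ), one_pos⟩)]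
        with t ht using hGnn t ht
    have hG0 : 0 ≤ G 0 := ge_of_tendsto htend hev
    have hG0eq : G 0 = (∑ y, w y * a y ^ (1/α - 1)) - ∑ y, a y ^ (1/α) := by
      rw [hG_def]
      simp only [sub_zero, one_mul, zero_mul, add_zero]
      rw [← Finset.sum_sub_distrib]
      refine Finset.sum_congr rfl fun y _ => ?_
      rw [mul_sub, haa y]; ring
    have hfin : (∑ y, a y ^ (1/α)) ≤ ∑ y, w y * a y ^ (1/α - 1) := by
      rw [hG0eq] at hG0; linarith
    calc (∑ y, (∑ x', P x' * W x' y ^ α) ^ (1/α)) = ∑ y, a y ^ (1/α) := by rw [ha_def]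
      _ ≤ ∑ y, w y * a y ^ (1/α - 1) := hfin
      _ = ∑ y, W x y ^ α * (∑ x', P x' * W x' y ^ α) ^ (1/α - 1) := by
          rw [ha_def, hw_def]
  -- the value of the optimal `E₀` objective
  have hgQge : ∀ x, ((∑ y, (∑ x', P x' * W x' y ^ α) ^ (1/α)) ^ α) ≤
      ∑ y, W x y ^ α * ((∑ x', P x' * W x' y ^ α) ^ (1 / α) /
        (∑ y', (∑ x', P x' * W x' y' ^ α) ^ (1 / α))) ^ (1 - α) := by
    intro x
    have e1 : ∀ y, ((∑ x', P x' * W x' y ^ α) ^ (1 / α) /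
        (∑ y', (∑ x', P x' * W x' y' ^ α) ^ (1 / α))) ^ (1 - α)
        = (∑ x', P x' * W x' y ^ α) ^ (1/α - 1) *
          ((∑ y', (∑ x', P x' * W x' y' ^ α) ^ (1/α)) ^ (1-α))⁻¹ := by
      intro y
      rw [Real.div_rpow (Real.rpow_nonneg (ha0 y) _) hf0pos.le,
        ← Real.rpow_mul (ha0 y), div_eq_mul_inv]
      have e2 : (1/α) * (1-α) = 1/α - 1 := by field_simp
      rw [e2]
    have e3 : (∑ y, W x y ^ α * ((∑ x', P x' * W x' y ^ α) ^ (1 / α) /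
        (∑ y', (∑ x', P x' * W x' y' ^ α) ^ (1 / α))) ^ (1 - α))
        = ((∑ y', (∑ x', P x' * W x' y' ^ α) ^ (1/α)) ^ (1-α))⁻¹ *
          ∑ y, W x y ^ α * (∑ x', P x' * W x' y ^ α) ^ (1/α - 1) := by
      rw [Finset.mul_sum]
      exact Finset.sum_congr rfl fun y _ => by rw [e1 y]; ring
    rw [e3]
    have e4 : ((∑ y', (∑ x', P x' * W x' y' ^ α) ^ (1/α)) ^ α)
        = ((∑ y', (∑ x', P x' * W x' y' ^ α) ^ (1/α)) ^ (1-α))⁻¹ *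
          (∑ y', (∑ x', P x' * W x' y' ^ α) ^ (1/α)) := by
      rw [← Real.rpow_neg hf0pos.le]
      have e5 := Real.rpow_add hf0pos (-(1-α)) 1
      rw [Real.rpow_one] at e5
      rw [← e5]
      congr 1
      ring
    rw [e4]
    exact mul_le_mul_of_nonneg_left (hb x)
      (inv_nonneg.2 (Real.rpow_nonneg hf0pos.le _))
  -- weak duality
  have hweak : ∀ Q' : Y → ℝ, (∀ y, 0 ≤ Q' y) → (∑ y, Q' y = 1) →
      ∃ x0, (∑ y, W x0 y ^ α * Q' y ^ (1 - α)) ≤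
        (∑ y, (∑ x, P x * W x y ^ α) ^ (1/α)) ^ α := by
    intro Q' hQ'0 hQ'1
    obtain ⟨x0, -, hx0⟩ := Finset.exists_min_image Finset.univ
      (fun x => ∑ y, W x y ^ α * Q' y ^ (1 - α)) Finset.univ_nonempty
    refine ⟨x0, ?_⟩
    calc (∑ y, W x0 y ^ α * Q' y ^ (1 - α))
        = ∑ x, P x * ∑ y, W x0 y ^ α * Q' y ^ (1 - α) := by
          rw [← Finset.sum_mul, hP1, one_mul]
      _ ≤ ∑ x, P x * ∑ y, W x y ^ α * Q' y ^ (1 - α) :=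
          Finset.sum_le_sum fun x _ =>
            mul_le_mul_of_nonneg_left (hx0 x (Finset.mem_univ x)) (hP0 x)
      _ = ∑ x, ∑ y, P x * (W x y ^ α * Q' y ^ (1 - α)) :=
          Finset.sum_congr rfl fun x _ => Finset.mul_sum _ _ _
      _ = ∑ y, ∑ x, P x * (W x y ^ α * Q' y ^ (1 - α)) := Finset.sum_comm
      _ = ∑ y, (∑ x, P x * W x y ^ α) * Q' y ^ (1 - α) :=
          Finset.sum_congr rfl fun y _ => by
            rw [Finset.sum_mul]
            exact Finset.sum_congr rfl fun x _ => by ring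
      _ = ∑ y, ((∑ x, P x * W x y ^ α) ^ (1/α)) ^ α * Q' y ^ (1 - α) :=
          Finset.sum_congr rfl fun y _ => by
            rw [← Real.rpow_mul (ha0 y), one_div, inv_mul_cancel₀ hαne, Real.rpow_one]
      _ ≤ (∑ y, (∑ x, P x * W x y ^ α) ^ (1/α)) ^ α * (∑ y, Q' y) ^ (1 - α) :=
          csz_holder Finset.univ hα0 hα1 _ _
            (fun y => Real.rpow_nonneg (ha0 y) _) hQ'0
      _ = (∑ y, (∑ x, P x * W x y ^ α) ^ (1/α)) ^ α := by
          rw [hQ'1, Real.one_rpow, mul_one]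
  -- key inequalities in ℝ≥0∞
  have keyA : (⨆ x, renyiTerm α (∑ y, W x y ^ α * ((∑ x', P x' * W x' y ^ α) ^ (1 / α) /
        (∑ y', (∑ x', P x' * W x' y' ^ α) ^ (1 / α))) ^ (1 - α)))
      ≤ ENNReal.ofReal ((1/ρ) * (-Real.log (∑ y, (∑ x, P x * W x y ^ α) ^ (1/α)))) := by
    apply iSup_le
    intro x
    have hx := hgQge x
    have hgpos : 0 < ∑ y, W x y ^ α * ((∑ x', P x' * W x' y ^ α) ^ (1 / α) /
        (∑ y', (∑ x', P x' * W x' y' ^ α) ^ (1 / α))) ^ (1 - α) :=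
      lt_of_lt_of_le (Real.rpow_pos_of_pos hf0pos α) hx
    simp only [renyiTerm]
    rw [if_neg (not_le.2 hgpos)]
    apply ENNReal.ofReal_le_ofReal
    have hlog : α * Real.log (∑ y, (∑ x, P x * W x y ^ α) ^ (1/α)) ≤
        Real.log (∑ y, W x y ^ α * ((∑ x', P x' * W x' y ^ α) ^ (1 / α) /
          (∑ y', (∑ x', P x' * W x' y' ^ α) ^ (1 / α))) ^ (1 - α)) := by
      have h := Real.log_le_log (Real.rpow_pos_of_pos hf0pos α) hx
      rwa [Real.log_rpow hf0pos] at h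
    calc (α - 1)⁻¹ * Real.log (∑ y, W x y ^ α * ((∑ x', P x' * W x' y ^ α) ^ (1 / α) /
          (∑ y', (∑ x', P x' * W x' y' ^ α) ^ (1 / α))) ^ (1 - α))
        ≤ (α - 1)⁻¹ * (α * Real.log (∑ y, (∑ x, P x * W x y ^ α) ^ (1/α))) :=
          mul_le_mul_of_nonpos_left hlog hαm1
      _ = (1/ρ) * (-Real.log (∑ y, (∑ x, P x * W x y ^ α) ^ (1/α))) := by
          rw [← mul_assoc, h_ratio]; ring
  have keyB : ∀ Q' : Y → ℝ, (∀ y, 0 ≤ Q' y) → (∑ y, Q' y = 1) →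
      ENNReal.ofReal ((1/ρ) * (-Real.log (∑ y, (∑ x, P x * W x y ^ α) ^ (1/α))))
        ≤ ⨆ x, renyiTerm α (∑ y, W x y ^ α * Q' y ^ (1 - α)) := by
    intro Q' h0 h1
    obtain ⟨x0, hx0⟩ := hweak Q' h0 h1
    refine le_trans ?_
      (le_iSup (fun x => renyiTerm α (∑ y, W x y ^ α * Q' y ^ (1 - α))) x0)
    by_cases hg : (∑ y, W x0 y ^ α * Q' y ^ (1 - α)) ≤ 0
    · simp only [renyiTerm, if_pos hg]
      exact le_top
    · push_neg at hg
      simp only [renyiTerm]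
      rw [if_neg (not_le.2 hg)]
      apply ENNReal.ofReal_le_ofReal
      have hlog : Real.log (∑ y, W x0 y ^ α * Q' y ^ (1 - α)) ≤
          α * Real.log (∑ y, (∑ x, P x * W x y ^ α) ^ (1/α)) := by
        have h := Real.log_le_log hg hx0
        rwa [Real.log_rpow hf0pos] at h
      calc (1/ρ) * (-Real.log (∑ y, (∑ x, P x * W x y ^ α) ^ (1/α)))
          = (α - 1)⁻¹ * (α * Real.log (∑ y, (∑ x, P x * W x y ^ α) ^ (1/α))) := by
            rw [← mul_assoc, h_ratio]; ring
        _ ≤ (α - 1)⁻¹ * Real.log (∑ y, W x0 y ^ α * Q' y ^ (1 - α)) :=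
            mul_le_mul_of_nonpos_left hlog hαm1
  have hVeq : ENNReal.ofReal (1 / ρ) *
      negLog (∑ y, (∑ x, P x * W x y ^ α) ^ (1 / α)) =
      ENNReal.ofReal ((1/ρ) * (-Real.log (∑ y, (∑ x, P x * W x y ^ α) ^ (1/α)))) := by
    simp only [negLog]
    rw [if_neg (not_le.2 hf0pos), ENNReal.ofReal_mul (by positivity : (0:ℝ) ≤ 1/ρ)]
  have hQ0' : ∀ y, 0 ≤ (∑ x, P x * W x y ^ α) ^ (1 / α) /
      (∑ y', (∑ x, P x * W x y' ^ α) ^ (1 / α)) :=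
    fun y => div_nonneg (Real.rpow_nonneg (ha0 y) _) hf0pos.le
  have hQ1' : (∑ y, (∑ x, P x * W x y ^ α) ^ (1 / α) /
      (∑ y', (∑ x, P x * W x y' ^ α) ^ (1 / α))) = 1 := by
    rw [← Finset.sum_div]
    exact div_self hf0pos.ne'
  refine ⟨P, fun y => (∑ x, P x * W x y ^ α) ^ (1 / α) /
      (∑ y', (∑ x, P x * W x y' ^ α) ^ (1 / α)), hP0, hP1, hQ0', hQ1', ?_, ?_, ?_⟩
  · intro P' h0 h1
    have hpos' := hFpos P' h0 h1
    simp only [negLog]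
    rw [if_neg (not_le.2 hpos'), if_neg (not_le.2 hf0pos)]
    refine mul_le_mul_right (ENNReal.ofReal_le_ofReal ?_) _
    have h := Real.log_le_log hf0pos (hPmin' P' h0 h1)
    linarith
  · intro Q' h0 h1
    exact le_trans keyA (keyB Q' h0 h1)
  · rw [hVeq]
    exact le_antisymm (keyB _ hQ0' hQ1') keyA
end

section
/- Let G be a graph on a nonempty finite vertex set X. Let d ≥ 1 and for each x ∈ X let U_x be a d×d complex Hermitian orthogonal-projection matrix (U_x² = U_x = U_x*), such that U_x · U_{x'} = 0 whenever x ≠ x' and {x, x'} is NOT an edge of G. Let F be a d×d density matrix and let t ≥ 0 be a real number with Tr(U_x F) ≥ e^{−t} for every x ∈ X. Then for every n ≥ 1 and every family of M sequences x₁, …, x_M ∈ Xⁿ with the property that for each pair m ≠ m' there is a coordinate i ∈ {1,…,n} with x_{m,i} ≠ x_{m',i} and {x_{m,i}, x_{m',i}} not an edge of G, one has M ≤ e^{n·t}. -/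
open scoped ComplexOrder

/-- A density matrix: positive semidefinite with unit trace. -/
def IsDensityMatrix {d : ℕ} (A : Matrix (Fin d) (Fin d) ℂ) : Prop :=
  A.PosSemidef ∧ A.trace = 1

section TensorAux

open Matrix Finset

variable {n d : ℕ}

/-- Entrywise tensor (Kronecker-style) product of `n` matrices. -/
noncomputable def kprod (A : Fin n → Matrix (Fin d) (Fin d) ℂ) :
    Matrix (Fin n → Fin d) (Fin n → Fin d) ℂ :=
  Matrix.of fun a b => ∏ i, A i (a i) (b i)

lemma kprod_apply (A : Fin n → Matrix (Fin d) (Fin d) ℂ) (a b : Fin n → Fin d) :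
    kprod A a b = ∏ i, A i (a i) (b i) := rfl

lemma kprod_mul (A B : Fin n → Matrix (Fin d) (Fin d) ℂ) :
    kprod A * kprod B = kprod (fun i => A i * B i) := by
  ext a b
  simp only [Matrix.mul_apply, kprod_apply]
  calc ∑ x : Fin n → Fin d, (∏ i, A i (a i) (x i)) * ∏ i, B i (x i) (b i)
      = ∑ x : Fin n → Fin d, ∏ i, (A i (a i) (x i) * B i (x i) (b i)) := by
        simp [Finset.prod_mul_distrib]
    _ = ∏ i, ∑ j, A i (a i) j * B i j (b i) :=
        (Fintype.prod_sum (κ := fun _ : Fin n => Fin d)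
          (fun i j => A i (a i) j * B i j (b i))).symm

lemma kprod_trace (A : Fin n → Matrix (Fin d) (Fin d) ℂ) :
    (kprod A).trace = ∏ i, (A i).trace := by
  simp only [Matrix.trace, Matrix.diag, kprod_apply]
  exact (Fintype.prod_sum (κ := fun _ : Fin n => Fin d)
    (fun i j => A i j j)).symm

lemma kprod_conjTranspose (A : Fin n → Matrix (Fin d) (Fin d) ℂ) :
    (kprod A)ᴴ = kprod (fun i => (A i)ᴴ) := by
  ext a b
  simp [kprod_apply, Matrix.conjTranspose_apply, map_prod]

lemma kprod_eq_zero (A : Fin n → Matrix (Fin d) (Fin d) ℂ) (i₀ : Fin n)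
    (h : A i₀ = 0) : kprod A = 0 := by
  ext a b
  exact Finset.prod_eq_zero (Finset.mem_univ i₀) (by simp [h])

lemma trace_nonneg_of_posSemidef' {m : Type*} [Fintype m] [DecidableEq m]
    {A : Matrix m m ℂ} (hA : A.PosSemidef) : 0 ≤ A.trace := by
  exact hA.trace_nonneg

open scoped MatrixOrder in
lemma psd_sqrt_exists {m : Type*} [Fintype m] [DecidableEq m]
    {A : Matrix m m ℂ} (hA : A.PosSemidef) :
    ∃ S : Matrix m m ℂ, S.PosSemidef ∧ S * S = A :=
  ⟨CFC.sqrt A, (CFC.sqrt_nonneg A).posSemidef, CFC.sqrt_mul_sqrt_self A hA.nonneg⟩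

/-- A positive semidefinite square root. -/
noncomputable def Matrix.PosSemidef.sqrt {m : Type*} [Fintype m] [DecidableEq m]
    {A : Matrix m m ℂ} (hA : A.PosSemidef) : Matrix m m ℂ :=
  Classical.choose (psd_sqrt_exists hA)

lemma Matrix.PosSemidef.posSemidef_sqrt {m : Type*} [Fintype m] [DecidableEq m]
    {A : Matrix m m ℂ} (hA : A.PosSemidef) : hA.sqrt.PosSemidef :=
  (Classical.choose_spec (psd_sqrt_exists hA)).1

lemma Matrix.PosSemidef.sqrt_mul_self {m : Type*} [Fintype m] [DecidableEq m]
    {A : Matrix m m ℂ} (hA : A.PosSemidef) : hA.sqrt * hA.sqrt = A :=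
  (Classical.choose_spec (psd_sqrt_exists hA)).2

set_option maxHeartbeats 1000000 in
lemma trace_mul_nonneg' {m : Type*} [Fintype m] [DecidableEq m]
    {A B : Matrix m m ℂ}
    (hA : A.PosSemidef) (hB : B.PosSemidef) : 0 ≤ (A * B).trace := by
  have h1 : A * B = hA.sqrt * (hA.sqrt * B) := by
    rw [← mul_assoc, hA.sqrt_mul_self]
  rw [h1, Matrix.trace_mul_comm]
  have hpsd : (hA.sqrt * B * hA.sqrt).PosSemidef := by
    have := hB.conjTranspose_mul_mul_same hA.sqrt
    rwa [hA.posSemidef_sqrt.isHermitian.eq] at this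
  exact trace_nonneg_of_posSemidef' hpsd

end TensorAux

open Matrix

/-- Theorem 3 of the paper (quantitative form): if `{U_x}` is a projective
representation of the confusability graph `G` with handle `F` satisfying
`Tr(U_x F) ≥ e^{-t}`, then any zero-error code of block-length `n` has at most
`e^{n t}` codewords. -/
theorem stmt6 {X : Type*} [Fintype X] [Nonempty X] (G : SimpleGraph X)
    (d : ℕ) (hd : 1 ≤ d) (U : X → Matrix (Fin d) (Fin d) ℂ)
    (hidem : ∀ x, U x * U x = U x) (hherm : ∀ x, (U x).IsHermitian)
    (horth : ∀ x x', x ≠ x' → ¬ G.Adj x x' → U x * U x' = 0)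
    (F : Matrix (Fin d) (Fin d) ℂ) (hF : IsDensityMatrix F)
    (t : ℝ) (ht : 0 ≤ t) (hval : ∀ x, Real.exp (-t) ≤ ((U x * F).trace.re))
    (n : ℕ) (hn : 1 ≤ n) (M : ℕ) (c : Fin M → Fin n → X)
    (hcode : ∀ m m', m ≠ m' →
      ∃ i, c m i ≠ c m' i ∧ ¬ G.Adj (c m i) (c m' i)) :
    (M : ℝ) ≤ Real.exp (n * t) := by
  classical
  -- the projectors associated to codewords
  set V : Fin M → Matrix (Fin n → Fin d) (Fin n → Fin d) ℂ :=
    fun m => kprod (fun i => U (c m i)) with hVdef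
  have hVorth : ∀ m m', m ≠ m' → V m * V m' = 0 := by
    intro m m' h
    obtain ⟨i, hne, hnadj⟩ := hcode m m' h
    rw [hVdef, kprod_mul]
    exact kprod_eq_zero _ i (horth _ _ hne hnadj)
  have hVidem : ∀ m, V m * V m = V m := by
    intro m; rw [hVdef, kprod_mul]; simp only [hidem]
  have hVherm : ∀ m, (V m)ᴴ = V m := by
    intro m; rw [hVdef, kprod_conjTranspose]
    simp only [(hherm _).eq]
  set S : Matrix (Fin n → Fin d) (Fin n → Fin d) ℂ := ∑ m, V m with hSdef
  have hSS : S * S = S := by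
    rw [hSdef, Finset.sum_mul_sum]
    refine Finset.sum_congr rfl fun m _ => ?_
    rw [Finset.sum_eq_single m (fun b _ hb => hVorth m b (Ne.symm hb))
      (fun h => absurd (Finset.mem_univ m) h)]
    exact hVidem m
  have hSherm : Sᴴ = S := by
    rw [hSdef, Matrix.conjTranspose_sum]
    exact Finset.sum_congr rfl fun m _ => hVherm m
  have hQ : (1 - S).PosSemidef := by
    have h2 : (1 - S)ᴴ * (1 - S) = 1 - S := by
      rw [Matrix.conjTranspose_sub, Matrix.conjTranspose_one, hSherm,
        sub_mul, mul_sub, mul_sub, hSS, one_mul, mul_one]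
      abel_nf
      simp only [one_mul, hSdef]
    exact h2 ▸ Matrix.posSemidef_conjTranspose_mul_self (1 - S)
  -- the tensor power of the handle
  set Fn : Matrix (Fin n → Fin d) (Fin n → Fin d) ℂ :=
    kprod (fun _ : Fin n => F) with hFndef
  have hFnPSD : Fn.PosSemidef := by
    have hW : (hF.1.sqrt)ᴴ * hF.1.sqrt = F := by
      rw [hF.1.posSemidef_sqrt.isHermitian.eq, hF.1.sqrt_mul_self]
    have : Fn = (kprod (fun _ : Fin n => hF.1.sqrt))ᴴ *
        (kprod (fun _ : Fin n => hF.1.sqrt)) := by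
      rw [kprod_conjTranspose, kprod_mul, hFndef]
      simp only [hW]
    exact this ▸ Matrix.posSemidef_conjTranspose_mul_self _
  have hFntr : Fn.trace = 1 := by
    rw [hFndef, kprod_trace]
    simp [hF.2]
  -- each term has large trace
  have hxreal : ∀ x, ((U x * F).trace : ℂ) = ((U x * F).trace.re : ℝ) := by
    intro x
    have hstar : star (U x * F).trace = (U x * F).trace := by
      rw [← Matrix.trace_conjTranspose, Matrix.conjTranspose_mul,
        (hherm x).eq, hF.1.1.eq, Matrix.trace_mul_comm]
    exact (Complex.conj_eq_iff_re.mp hstar).symm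
  have hterm : ∀ m, Real.exp (-(n * t)) ≤ ((V m * Fn).trace).re := by
    intro m
    have h1 : (V m * Fn).trace = ∏ i, (U (c m i) * F).trace := by
      rw [hVdef, hFndef, kprod_mul, kprod_trace]
    have h2 : (V m * Fn).trace = ((∏ i, ((U (c m i) * F).trace.re) : ℝ) : ℂ) := by
      rw [h1, Complex.ofReal_prod]
      exact Finset.prod_congr rfl fun i _ => hxreal _
    have h3 : ((V m * Fn).trace).re = ∏ i, ((U (c m i) * F).trace.re) := by
      rw [h2, Complex.ofReal_re]
    rw [h3]
    have h4 : Real.exp (-(n * t)) = ∏ _i : Fin n, Real.exp (-t) := by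
      rw [Finset.prod_const, Finset.card_univ, Fintype.card_fin,
        ← Real.exp_nat_mul]
      ring_nf
    rw [h4]
    exact Finset.prod_le_prod (fun i _ => (Real.exp_pos _).le)
      (fun i _ => hval _)
  -- sum up
  have hsumle : ∑ m, ((V m * Fn).trace).re ≤ 1 := by
    have h0 : 0 ≤ ((1 - S) * Fn).trace := trace_mul_nonneg' hQ hFnPSD
    have h1 : ((1 - S) * Fn).trace = 1 - ∑ m, (V m * Fn).trace := by
      rw [sub_mul, Matrix.trace_sub, one_mul, hFntr, hSdef, Finset.sum_mul,
        Matrix.trace_sum]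
    rw [h1] at h0
    have h2 := (Complex.le_def.mp h0).1
    simp only [Complex.zero_re, Complex.sub_re, Complex.one_re,
      Complex.re_sum] at h2
    linarith
  have hM : (M : ℝ) * Real.exp (-(n * t)) ≤ 1 := by
    calc (M : ℝ) * Real.exp (-(n * t))
        ≤ ∑ _m : Fin M, Real.exp (-(n * t)) := by
          rw [Finset.sum_const, Finset.card_univ, Fintype.card_fin,
            nsmul_eq_mul]
      _ ≤ ∑ m, ((V m * Fn).trace).re :=
          Finset.sum_le_sum fun m _ => hterm m
      _ ≤ 1 := hsumle
  calc (M : ℝ) = (M : ℝ) * Real.exp (-(n * t)) * Real.exp (n * t) := by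
        rw [mul_assoc, ← Real.exp_add]; simp
    _ ≤ 1 * Real.exp (n * t) :=
        mul_le_mul_of_nonneg_right hM (Real.exp_pos _).le
    _ = Real.exp (n * t) := one_mul _
end

section
/- Let G be a graph on a nonempty finite vertex set X. Let d ≥ 1 and for each x ∈ X let u_x ∈ ℂ^d be a unit vector such that ⟨u_x, u_{x'}⟩ = 0 whenever x ≠ x' and {x, x'} is NOT an edge of G. Let c ∈ ℂ^d be a unit vector and let t ≥ 0 be a real number with |⟨u_x, c⟩|² ≥ e^{−t} for every x ∈ X. Then for every n ≥ 1 and every family of M sequences x₁, …, x_M ∈ Xⁿ with the property that for each pair m ≠ m' there is a coordinate i ∈ {1,…,n} with x_{m,i} ≠ x_{m',i} and {x_{m,i}, x_{m',i}} not an edge of G, one has M ≤ e^{n·t}. -/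
open Finset

noncomputable def tvec {n d : ℕ} (a : Fin n → EuclideanSpace ℂ (Fin d)) :
    EuclideanSpace ℂ (Fin n → Fin d) :=
  (WithLp.equiv 2 _).symm (fun f => ∏ i, a i (f i))

lemma tvec_inner {n d : ℕ} (a b : Fin n → EuclideanSpace ℂ (Fin d)) :
    inner (𝕜 := ℂ) (tvec a) (tvec b) = ∏ i, inner (𝕜 := ℂ) (a i) (b i) := by
  simp only [tvec, PiLp.inner_apply, RCLike.inner_apply, WithLp.equiv_symm_apply, PiLp.toLp_apply, map_prod]
  rw [Finset.prod_univ_sum, Fintype.piFinset_univ]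
  exact Finset.sum_congr rfl fun f _ => (Finset.prod_mul_distrib).symm

/-- Lovász's bound (quantitative form): if `{u_x}` is an orthonormal representation
of the confusability graph `G` with handle `c₀` satisfying `|⟨u_x, c₀⟩|² ≥ e^{-t}`,
then any zero-error code of block-length `n` has at most `e^{n t}` codewords. -/
theorem stmt7 {X : Type*} [Fintype X] [Nonempty X] (G : SimpleGraph X)
    (d : ℕ) (hd : 1 ≤ d) (u : X → EuclideanSpace ℂ (Fin d))
    (hunit : ∀ x, ‖u x‖ = 1)
    (horth : ∀ x x', x ≠ x' → ¬ G.Adj x x' → inner (𝕜 := ℂ) (u x) (u x') = 0)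
    (c₀ : EuclideanSpace ℂ (Fin d)) (hc₀ : ‖c₀‖ = 1)
    (t : ℝ) (ht : 0 ≤ t)
    (hval : ∀ x, Real.exp (-t) ≤ ‖inner (𝕜 := ℂ) (u x) c₀‖ ^ 2)
    (n : ℕ) (hn : 1 ≤ n) (M : ℕ) (c : Fin M → Fin n → X)
    (hcode : ∀ m m', m ≠ m' →
      ∃ i, c m i ≠ c m' i ∧ ¬ G.Adj (c m i) (c m' i)) :
    (M : ℝ) ≤ Real.exp (n * t) := by
  set V : Fin M → EuclideanSpace ℂ (Fin n → Fin d) :=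
    fun m => tvec (fun i => u (c m i)) with hVdef
  set C : EuclideanSpace ℂ (Fin n → Fin d) := tvec (fun _ => c₀) with hCdef
  have hV : Orthonormal ℂ V := by
    rw [orthonormal_iff_ite]
    intro m m'
    rw [hVdef]
    simp only
    rw [tvec_inner]
    by_cases h : m = m'
    · subst h
      simp only [if_pos rfl]
      have : ∀ i : Fin n, inner (𝕜 := ℂ) (u (c m i)) (u (c m i)) = 1 := by
        intro i
        rw [inner_self_eq_norm_sq_to_K, hunit]
        norm_num
      rw [Finset.prod_congr rfl fun i _ => this i, Finset.prod_const, one_pow]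
      simp
    · simp only [if_neg h]
      obtain ⟨i, hne, hadj⟩ := hcode m m' h
      exact Finset.prod_eq_zero (Finset.mem_univ i) (horth _ _ hne hadj)
  have hC : ‖C‖ = 1 := by
    have h1 : inner (𝕜 := ℂ) C C = 1 := by
      rw [hCdef, tvec_inner]
      have hcc : inner (𝕜 := ℂ) c₀ c₀ = 1 := by
        rw [inner_self_eq_norm_sq_to_K, hc₀]; norm_num
      rw [Finset.prod_congr rfl fun i _ => hcc, Finset.prod_const, one_pow]
    have h3 : ‖C‖ ^ 2 = 1 := by
      have h2 := inner_self_eq_norm_sq_to_K (𝕜 := ℂ) (x := C)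
      rw [h1] at h2
      have h4 : ((‖C‖ ^ 2 : ℝ) : ℂ) = 1 := by push_cast; exact h2.symm
      exact_mod_cast h4
    nlinarith [norm_nonneg C]
  have bessel := hV.sum_inner_products_le C (s := Finset.univ)
  have hlow : ∀ m : Fin M, Real.exp (-(n * t)) ≤ ‖inner (𝕜 := ℂ) (V m) C‖ ^ 2 := by
    intro m
    rw [hVdef]
    simp only
    rw [tvec_inner, norm_prod]
    have : (∏ i : Fin n, ‖inner (𝕜 := ℂ) (u (c m i)) c₀‖) ^ 2
        = ∏ i : Fin n, ‖inner (𝕜 := ℂ) (u (c m i)) c₀‖ ^ 2 := by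
      rw [Finset.prod_pow]
    rw [this]
    calc Real.exp (-(n * t)) = ∏ _i : Fin n, Real.exp (-t) := by
          rw [Finset.prod_const, ← Real.exp_nat_mul, Finset.card_univ, Fintype.card_fin]
          ring_nf
      _ ≤ _ := Finset.prod_le_prod (fun _ _ => (Real.exp_pos _).le)
          (fun i _ => hval (c m i))
  have hsum : (M : ℝ) * Real.exp (-(n * t)) ≤ 1 := by
    calc (M : ℝ) * Real.exp (-(n * t))
        = ∑ _m : Fin M, Real.exp (-(n * t)) := by
          rw [Finset.sum_const, Finset.card_univ, Fintype.card_fin, nsmul_eq_mul]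
      _ ≤ ∑ m : Fin M, ‖inner (𝕜 := ℂ) (V m) C‖ ^ 2 :=
          Finset.sum_le_sum (fun m _ => hlow m)
      _ ≤ ‖C‖ ^ 2 := bessel
      _ = 1 := by rw [hC]; norm_num
  calc (M : ℝ) = (M : ℝ) * Real.exp (-(n * t)) * Real.exp (n * t) := by
        rw [mul_assoc, ← Real.exp_add]; simp
    _ ≤ 1 * Real.exp (n * t) :=
        mul_le_mul_of_nonneg_right hsum (Real.exp_pos _).le
    _ = Real.exp (n * t) := one_mul _
end

section
/- Let X and Y be nonempty finite sets and let W be a classical channel from X to Y, i.e., W(y|x) ≥ 0 and ∑_{y∈Y} W(y|x) = 1 for every x ∈ X. Then the maximum over all probability distributions P on X of (−log max_{y∈Y} ∑_{x : W(y|x)>0} P(x)) equals the minimum over all probability distributions Q on Y of max_{x∈X} (−log ∑_{y : W(y|x)>0} Q(y)), the equality holding in the extended nonnegative reals [0,∞], with the maximum over P and the minimum over Q attained. -/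
open scoped ENNReal

lemma negLog_anti {a b : ℝ} (h : a ≤ b) : negLog b ≤ negLog a := by
  unfold negLog
  by_cases ha : a ≤ 0
  · simp [ha]
  · have hb : ¬ b ≤ 0 := fun hb => ha (h.trans hb)
    simp only [ha, hb, if_false]
    exact ENNReal.ofReal_le_ofReal
      (by have := Real.log_le_log (lt_of_not_ge ha) h; linarith)

lemma iSup_negLog {X : Type*} [Fintype X] [Nonempty X] (f : X → ℝ) :
    (⨆ x, negLog (f x)) = negLog (Finset.univ.inf' Finset.univ_nonempty f) := by
  apply le_antisymm
  · exact iSup_le fun x => negLog_anti (Finset.inf'_le f (Finset.mem_univ x))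
  · obtain ⟨x0, -, hx0⟩ := Finset.exists_mem_eq_inf' Finset.univ_nonempty f
    rw [hx0]
    exact le_iSup (fun x => negLog (f x)) x0

/-- Weak duality for matrix games. -/
lemma weak_duality {X Y : Type*} [Fintype X] [Nonempty X] [Fintype Y] [Nonempty Y]
    (A : X → Y → ℝ) {P : X → ℝ} {Q : Y → ℝ}
    (hP : P ∈ stdSimplex ℝ X) (hQ : Q ∈ stdSimplex ℝ Y) :
    Finset.univ.inf' Finset.univ_nonempty (fun x => ∑ y, A x y * Q y) ≤
      Finset.univ.sup' Finset.univ_nonempty (fun y => ∑ x, A x y * P x) := by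
  set m := Finset.univ.inf' Finset.univ_nonempty (fun x => ∑ y, A x y * Q y) with hm
  set M := Finset.univ.sup' Finset.univ_nonempty (fun y => ∑ x, A x y * P x) with hM
  have h1 : m = ∑ x, P x * m := by
    rw [← Finset.sum_mul, hP.2, one_mul]
  have h2 : ∑ x, P x * m ≤ ∑ x, P x * (∑ y, A x y * Q y) := by
    apply Finset.sum_le_sum
    intro x _
    exact mul_le_mul_of_nonneg_left
      (Finset.inf'_le (fun x => ∑ y, A x y * Q y) (Finset.mem_univ x)) (hP.1 x)
  have h3 : ∑ x, P x * (∑ y, A x y * Q y) = ∑ y, (∑ x, A x y * P x) * Q y := by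
    simp_rw [Finset.mul_sum, Finset.sum_mul]
    rw [Finset.sum_comm]
    exact Finset.sum_congr rfl fun y _ => Finset.sum_congr rfl fun x _ => by ring
  have h4 : ∑ y, (∑ x, A x y * P x) * Q y ≤ ∑ y, M * Q y := by
    apply Finset.sum_le_sum
    intro y _
    exact mul_le_mul_of_nonneg_right
      (Finset.le_sup' (fun y => ∑ x, A x y * P x) (Finset.mem_univ y)) (hQ.1 y)
  have h5 : ∑ y, M * Q y = M := by rw [← Finset.mul_sum, hQ.2, mul_one]
  calc m = ∑ x, P x * m := h1
    _ ≤ ∑ x, P x * (∑ y, A x y * Q y) := h2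
    _ = ∑ y, (∑ x, A x y * P x) * Q y := h3
    _ ≤ ∑ y, M * Q y := h4
    _ = M := h5

/-- Strong duality (von Neumann minimax) for matrix games, proved via
Hahn–Banach separation. -/
lemma minimax_exists {X Y : Type*} [Fintype X] [Nonempty X] [Fintype Y] [Nonempty Y]
    (A : X → Y → ℝ) :
    ∃ P ∈ stdSimplex ℝ X, ∃ Q ∈ stdSimplex ℝ Y,
      (∀ Q' ∈ stdSimplex ℝ Y,
        Finset.univ.inf' Finset.univ_nonempty (fun x => ∑ y, A x y * Q' y) ≤
          Finset.univ.inf' Finset.univ_nonempty (fun x => ∑ y, A x y * Q y)) ∧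
      (∀ y, ∑ x, A x y * P x ≤
        Finset.univ.inf' Finset.univ_nonempty (fun x => ∑ y, A x y * Q y)) := by
  classical
  -- the payoff to the Q-player
  set g : (Y → ℝ) → ℝ :=
    fun Q' => Finset.univ.inf' Finset.univ_nonempty (fun x => ∑ y, A x y * Q' y) with hg
  have hgc : Continuous g := by
    apply Continuous.finset_inf'_apply (f := fun x (Q' : Y → ℝ) => ∑ y, A x y * Q' y)
    intro i _
    exact continuous_finset_sum _ fun y _ => continuous_const.mul (continuous_apply y)
  have hsne : (stdSimplex ℝ Y).Nonempty := ⟨_, single_mem_stdSimplex ℝ (Classical.arbitrary Y)⟩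
  obtain ⟨Q, hQmem, hQmax⟩ :=
    (isCompact_stdSimplex ℝ Y).exists_isMaxOn hsne hgc.continuousOn
  set v : ℝ := g Q with hv
  have hQm : ∀ Q' ∈ stdSimplex ℝ Y, g Q' ≤ v := fun Q' hQ' => hQmax hQ'
  -- separation
  set U : Set (X → ℝ) := ⋂ x, {z : X → ℝ | v < z x} with hU
  set B : Set (X → ℝ) :=
    {z | ∃ q ∈ stdSimplex ℝ Y, ∀ x, z x ≤ ∑ y, A x y * q y} with hB
  have hUopen : IsOpen U :=
    isOpen_iInter_of_finite fun x => isOpen_lt continuous_const (continuous_apply x)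
  have hUconv : Convex ℝ U :=
    convex_iInter fun x => convex_halfSpace_gt ⟨fun a b => rfl, fun c a => rfl⟩ v
  have hBconv : Convex ℝ B := by
    rintro z1 ⟨q1, hq1, hz1⟩ z2 ⟨q2, hq2, hz2⟩ a b ha hb hab
    refine ⟨a • q1 + b • q2, convex_stdSimplex ℝ Y hq1 hq2 ha hb hab, fun x => ?_⟩
    have : ∑ y, A x y * (a • q1 + b • q2) y
        = a * (∑ y, A x y * q1 y) + b * (∑ y, A x y * q2 y) := by
      simp only [Pi.add_apply, Pi.smul_apply, smul_eq_mul, Finset.mul_sum,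
        ← Finset.sum_add_distrib]
      exact Finset.sum_congr rfl fun y _ => by ring
    rw [this]
    simp only [Pi.add_apply, Pi.smul_apply, smul_eq_mul]
    exact add_le_add (mul_le_mul_of_nonneg_left (hz1 x) ha)
      (mul_le_mul_of_nonneg_left (hz2 x) hb)
  have hdisj : Disjoint U B := by
    rw [Set.disjoint_left]
    rintro z hzU ⟨q, hq, hzq⟩
    have : v < g q := by
      rw [hg]
      rw [Finset.lt_inf'_iff]
      intro x _
      exact lt_of_lt_of_le (Set.mem_iInter.1 hzU x) (hzq x)
    exact absurd (hQm q hq) (not_le.2 this)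
  obtain ⟨f, u, hfU, hfB⟩ := geometric_hahn_banach_open hUconv hUopen hBconv hdisj
  -- coordinates of f
  set p : X → ℝ := fun x => f (fun j => if x = j then (1 : ℝ) else 0) with hp
  have hf_eq : ∀ z : X → ℝ, f z = ∑ x, z x * p x := by
    intro z
    conv_lhs => rw [pi_eq_sum_univ z]
    rw [map_sum]
    exact Finset.sum_congr rfl fun x _ => by
      rw [map_smul]; simp [hp, smul_eq_mul]
  -- the base point of B
  have hb0 : (fun x => ∑ y, A x y * Q y) ∈ B := ⟨Q, hQmem, fun x => le_rfl⟩
  have hfb0 : u ≤ f (fun x => ∑ y, A x y * Q y) := hfB _ hb0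
  -- p is nonpositive
  have hple : ∀ x, p x ≤ 0 := by
    intro x0
    by_contra hpos
    push_neg at hpos
    set b0 : X → ℝ := fun x => ∑ y, A x y * Q y with hb0def
    set t : ℝ := (f b0 - u + 1) / p x0 with ht
    have hbt : (b0 - t • fun j => if x0 = j then (1 : ℝ) else 0) ∈ B := by
      refine ⟨Q, hQmem, fun x => ?_⟩
      simp only [Pi.sub_apply, Pi.smul_apply, smul_eq_mul]
      have h1 : 0 ≤ t := by
        apply div_nonneg _ hpos.le
        have : u ≤ f b0 := hfb0
        linarith
      have : 0 ≤ t * (if x0 = x then (1 : ℝ) else 0) := by positivity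
      simp only [hb0def]; linarith
    have := hfB _ hbt
    rw [map_sub, map_smul] at this
    have hfe : f (fun j => if x0 = j then (1 : ℝ) else 0) = p x0 := rfl
    rw [smul_eq_mul, hfe] at this
    have htp : t * p x0 = f b0 - u + 1 := by
      rw [ht, div_mul_cancel₀]
      exact ne_of_gt hpos
    have : u ≤ f b0 - (f b0 - u + 1) := by linarith
    linarith
  set c : ℝ := ∑ x, p x with hc
  -- v * c ≤ u via a limit along ε → 0⁺
  have hvc : v * c ≤ u := by
    have hev : ∀ ε : ℝ, 0 < ε → (v + ε) * c < u := by
      intro ε hε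
      have hmem : (fun _ : X => v + ε) ∈ U := by
        rw [hU]; exact Set.mem_iInter.2 fun x => by simpa using hε
      have := hfU _ hmem
      rw [hf_eq] at this
      calc (v + ε) * c = ∑ x, (v + ε) * p x := by rw [hc, Finset.mul_sum]
        _ < u := this
    have htend : Filter.Tendsto (fun ε : ℝ => (v + ε) * c) (nhdsWithin 0 (Set.Ioi 0))
        (nhds (v * c)) := by
      have : Filter.Tendsto (fun ε : ℝ => (v + ε) * c) (nhds 0) (nhds ((v + 0) * c)) :=
        ((continuous_const.add continuous_id).mul continuous_const).tendsto 0
      rw [add_zero] at this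
      exact this.mono_left nhdsWithin_le_nhds
    exact le_of_tendsto htend
      (eventually_nhdsWithin_of_forall fun ε hε => (hev ε hε).le)
  -- c is strictly negative
  have hcneg : c < 0 := by
    rcases lt_or_eq_of_le (Finset.sum_nonpos fun x _ => hple x) with h | h
    · exact h
    · exfalso
      have hall : ∀ x, p x = 0 := by
        intro x
        have := (Finset.sum_eq_zero_iff_of_nonpos fun i _ => hple i).1 h
        exact this x (Finset.mem_univ x)
      have hfz : ∀ z : X → ℝ, f z = 0 := by
        intro z; rw [hf_eq]; simp [hall]
      have h1 : (0 : ℝ) < u := by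
        have hmem : (fun _ : X => v + 1) ∈ U := by
          rw [hU]; exact Set.mem_iInter.2 fun x => by simp
        have := hfU _ hmem; rwa [hfz] at this
      have h2 : u ≤ 0 := by
        have := hfb0; rwa [hfz] at this
      linarith
  -- columns of A lie in B
  have hcol : ∀ y, u ≤ ∑ x, A x y * p x := by
    intro y
    have hmem : (fun x => A x y) ∈ B := by
      refine ⟨fun y' => if y = y' then 1 else 0, ite_eq_mem_stdSimplex ℝ y, fun x => ?_⟩
      simp [mul_ite]
    have := hfB _ hmem
    rwa [hf_eq] at this
  -- define P
  refine ⟨fun x => p x / c, ⟨fun x => div_nonneg_iff.2 (Or.inr ⟨hple x, hcneg.le⟩),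
    by rw [← Finset.sum_div, ← hc, div_self (ne_of_lt hcneg)]⟩, Q, hQmem, hQm, ?_⟩
  intro y
  have h1 : v * c ≤ ∑ x, A x y * p x := le_trans hvc (hcol y)
  have h2 : (∑ x, A x y * p x) / c ≤ v := (div_le_iff_of_neg hcneg).2 h1
  calc ∑ x, A x y * (p x / c) = (∑ x, A x y * p x) / c := by
        rw [Finset.sum_div]; exact Finset.sum_congr rfl fun x _ => by ring
    _ ≤ v := h2

/-- Minimax duality for `R_∞`:
`max_P -log max_y ∑_{x : W(y|x)>0} P(x) = min_Q max_x -log ∑_{y : W(y|x)>0} Q(y)`,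
both extrema attained, the equality holding in `[0,∞]`. -/
theorem stmt10 {X Y : Type*} [Fintype X] [Nonempty X] [Fintype Y] [Nonempty Y]
    (W : X → Y → ℝ) (hW : ∀ x y, 0 ≤ W x y) (hW1 : ∀ x, ∑ y, W x y = 1) :
    ∃ (P : X → ℝ) (Q : Y → ℝ),
      (∀ x, 0 ≤ P x) ∧ (∑ x, P x = 1) ∧ (∀ y, 0 ≤ Q y) ∧ (∑ y, Q y = 1) ∧
      (∀ P' : X → ℝ, (∀ x, 0 ≤ P' x) → (∑ x, P' x = 1) →
        negLog (Finset.univ.sup' Finset.univ_nonempty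
            fun y => ∑ x, if 0 < W x y then P' x else 0) ≤
          negLog (Finset.univ.sup' Finset.univ_nonempty
            fun y => ∑ x, if 0 < W x y then P x else 0)) ∧
      (∀ Q' : Y → ℝ, (∀ y, 0 ≤ Q' y) → (∑ y, Q' y = 1) →
        (⨆ x, negLog (∑ y, if 0 < W x y then Q y else 0)) ≤
          ⨆ x, negLog (∑ y, if 0 < W x y then Q' y else 0)) ∧
      negLog (Finset.univ.sup' Finset.univ_nonempty
          fun y => ∑ x, if 0 < W x y then P x else 0) =
        ⨆ x, negLog (∑ y, if 0 < W x y then Q y else 0) := by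
  classical
  set A : X → Y → ℝ := fun x y => if 0 < W x y then 1 else 0 with hA
  obtain ⟨P, hPmem, Q, hQmem, hQopt, hPopt⟩ := minimax_exists A
  set v : ℝ := Finset.univ.inf' Finset.univ_nonempty (fun x => ∑ y, A x y * Q y) with hv
  have hiteP : ∀ (g : X → ℝ) (y : Y),
      (∑ x, if 0 < W x y then g x else 0) = ∑ x, A x y * g x :=
    fun g y => Finset.sum_congr rfl fun x _ => by
      by_cases h : 0 < W x y <;> simp [hA, h]
  have hiteQ : ∀ (g : Y → ℝ) (x : X),
      (∑ y, if 0 < W x y then g y else 0) = ∑ y, A x y * g y :=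
    fun g x => Finset.sum_congr rfl fun y _ => by
      by_cases h : 0 < W x y <;> simp [hA, h]
  have hMP : Finset.univ.sup' Finset.univ_nonempty (fun y => ∑ x, A x y * P x) = v :=
    le_antisymm (Finset.sup'_le _ _ fun y _ => hPopt y) (weak_duality A hPmem hQmem)
  refine ⟨P, Q, hPmem.1, hPmem.2, hQmem.1, hQmem.2, ?_, ?_, ?_⟩
  · intro P' hP'1 hP'2
    simp only [hiteP]
    apply negLog_anti
    rw [hMP]
    exact weak_duality A ⟨hP'1, hP'2⟩ hQmem
  · intro Q' hQ'1 hQ'2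
    simp only [hiteQ]
    rw [iSup_negLog, iSup_negLog]
    exact negLog_anti (hQopt Q' ⟨hQ'1, hQ'2⟩)
  · simp only [hiteP, hiteQ]
    rw [iSup_negLog, hMP]
end

section
/- Let X and Y be nonempty finite sets and let W be a classical channel from X to Y, i.e., W(y|x) ≥ 0 and ∑_{y∈Y} W(y|x) = 1 for every x ∈ X. For each x ∈ X define the unit vector φ_x ∈ ℝ^Y by φ_x(y) = √(W(y|x)). Then the minimum over all probability distributions Q on Y of max_{x∈X} (−2 log ∑_{y∈Y} √(W(y|x)·Q(y))) equals the minimum over all unit-norm vectors c ∈ ℝ^Y of max_{x∈X} (−log ⟨φ_x, c⟩²), the equality holding in the extended nonnegative reals [0,∞], with both minima attained. -/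
open scoped ENNReal

lemma negLog_anti_s11 {r s : ℝ} (h : r ≤ s) : negLog s ≤ negLog r := by
  unfold negLog
  by_cases hr : r ≤ 0
  · simp [hr]
  · have hs : ¬ s ≤ 0 := fun hs => hr (h.trans hs)
    simp only [hr, hs, if_false]
    exact ENNReal.ofReal_le_ofReal (by
      have := Real.log_le_log (lt_of_not_ge hr) h
      linarith)

lemma two_mul_negLog {t : ℝ} (ht : 0 ≤ t) : 2 * negLog t = negLog (t ^ 2) := by
  rcases eq_or_lt_of_le ht with h | h
  · simp [negLog, ← h]
  · have h2 : (0:ℝ) < t ^ 2 := by positivity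
    simp only [negLog, not_le.2 h, not_le.2 h2, if_false]
    rw [Real.log_pow]
    push_cast
    rw [show -(2 * Real.log t) = 2 * (-Real.log t) by ring,
      ENNReal.ofReal_mul (by norm_num)]
    norm_num

lemma iSup_negLog_eq {X : Type*} [Fintype X] [Nonempty X] (f : X → ℝ) (x₀ : X)
    (hx₀ : ∀ x, f x₀ ≤ f x) : (⨆ x, negLog (f x)) = negLog (f x₀) :=
  le_antisymm (iSup_le fun x => negLog_anti_s11 (hx₀ x)) (le_iSup (fun x => negLog (f x)) x₀)

lemma iSup_two_negLog_eq {X : Type*} [Fintype X] [Nonempty X] (f : X → ℝ) (x₀ : X)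
    (hx₀ : ∀ x, f x₀ ≤ f x) : (⨆ x, 2 * negLog (f x)) = 2 * negLog (f x₀) :=
  le_antisymm (iSup_le fun x => mul_le_mul_right (negLog_anti_s11 (hx₀ x)) 2)
    (le_iSup (fun x => 2 * negLog (f x)) x₀)

/-- The cut-off rate of a classical channel `W` equals the Lovász-type value of
the square-root representation `φ_x(y) = √W(y|x)`:
`min_Q max_x -2 log ∑_y √(W(y|x) Q(y)) = min_{‖c‖=1} max_x -log ⟨φ_x, c⟩²`,
both minima attained, the equality holding in `[0,∞]`. -/
theorem stmt11 {X Y : Type*} [Fintype X] [Nonempty X] [Fintype Y] [Nonempty Y]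
    (W : X → Y → ℝ) (hW : ∀ x y, 0 ≤ W x y) (hW1 : ∀ x, ∑ y, W x y = 1) :
    ∃ (Q : Y → ℝ) (c : Y → ℝ),
      (∀ y, 0 ≤ Q y) ∧ (∑ y, Q y = 1) ∧ (∑ y, c y ^ 2 = 1) ∧
      (∀ Q' : Y → ℝ, (∀ y, 0 ≤ Q' y) → (∑ y, Q' y = 1) →
        (⨆ x, 2 * negLog (∑ y, Real.sqrt (W x y * Q y))) ≤
          ⨆ x, 2 * negLog (∑ y, Real.sqrt (W x y * Q' y))) ∧
      (∀ c' : Y → ℝ, (∑ y, c' y ^ 2 = 1) →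
        (⨆ x, negLog ((∑ y, Real.sqrt (W x y) * c y) ^ 2)) ≤
          ⨆ x, negLog ((∑ y, Real.sqrt (W x y) * c' y) ^ 2)) ∧
      (⨆ x, 2 * negLog (∑ y, Real.sqrt (W x y * Q y))) =
        ⨆ x, negLog ((∑ y, Real.sqrt (W x y) * c y) ^ 2) := by
  classical
  -- the inner "Bhattacharyya" sum
  set g : X → (Y → ℝ) → ℝ := fun x Q => ∑ y, Real.sqrt (W x y * Q y) with hg
  have hgcont : ∀ x : X, Continuous (fun Q : Y → ℝ => g x Q) := by
    intro x
    exact continuous_finset_sum _ fun y _ =>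
      (Real.continuous_sqrt).comp ((continuous_const).mul (continuous_apply y))
  -- the min over x
  set m : (Y → ℝ) → ℝ := fun Q => Finset.univ.inf' Finset.univ_nonempty (fun x => g x Q) with hm
  have hmcont : Continuous m := by
    apply Continuous.finset_inf'_apply Finset.univ_nonempty
    intro x _; exact hgcont x
  -- the simplex is compact and nonempty
  have hScompact : IsCompact (stdSimplex ℝ Y) := isCompact_stdSimplex ℝ Y
  obtain ⟨y₀⟩ := ‹Nonempty Y›
  have hSne : (stdSimplex ℝ Y).Nonempty := by
    refine ⟨fun y => if y = y₀ then 1 else 0, fun y => by positivity, ?_⟩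
    simp
  obtain ⟨Q, hQS, hQmax'⟩ := hScompact.exists_isMaxOn hSne hmcont.continuousOn
  have hQmax : ∀ Q' ∈ stdSimplex ℝ Y, m Q' ≤ m Q := fun Q' h => hQmax' h
  obtain ⟨hQ0, hQ1⟩ := hQS
  -- properties of g and m
  have hgnn : ∀ (x : X) (Q' : Y → ℝ), (∀ y, 0 ≤ Q' y) → 0 ≤ g x Q' := by
    intro x Q' hQ'
    exact Finset.sum_nonneg fun y _ => Real.sqrt_nonneg _
  have hm_le : ∀ (x : X) (Q' : Y → ℝ), m Q' ≤ g x Q' := fun x Q' =>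
    Finset.inf'_le _ (Finset.mem_univ x)
  have hm_mem : ∀ Q' : Y → ℝ, ∃ x, m Q' = g x Q' := by
    intro Q'
    obtain ⟨x, _, hx⟩ := Finset.exists_mem_eq_inf' (α := ℝ) Finset.univ_nonempty (fun x => g x Q')
    exact ⟨x, hx⟩
  -- the handle
  refine ⟨Q, fun y => Real.sqrt (Q y), hQ0, hQ1, ?_, ?_, ?_, ?_⟩
  · simp only [Real.sq_sqrt (hQ0 _)]
    exact hQ1
  · -- Q is a minimizer of the cut-off objective
    intro Q' hQ'0 hQ'1
    obtain ⟨x₀, hx₀⟩ := hm_mem Q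
    obtain ⟨x₁, hx₁⟩ := hm_mem Q'
    rw [iSup_two_negLog_eq (fun x => g x Q) x₀ (fun x => hx₀.symm.le.trans (hm_le x Q)),
        iSup_two_negLog_eq (fun x => g x Q') x₁ (fun x => hx₁.symm.le.trans (hm_le x Q'))]
    have : g x₁ Q' ≤ g x₀ Q := by
      rw [← hx₀, ← hx₁]; exact hQmax Q' ⟨hQ'0, hQ'1⟩
    exact mul_le_mul_right (negLog_anti_s11 this) 2
  · -- c = √Q is a minimizer of the Lovász-type objective
    intro c' hc'
    have hc_eq : ∀ x, (∑ y, Real.sqrt (W x y) * Real.sqrt (Q y)) = g x Q := by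
      intro x
      exact Finset.sum_congr rfl fun y _ => (Real.sqrt_mul (hW x y) _).symm
    obtain ⟨x₀, hx₀⟩ := hm_mem Q
    have hLHS : (⨆ x, negLog ((∑ y, Real.sqrt (W x y) * Real.sqrt (Q y)) ^ 2))
        = negLog ((g x₀ Q) ^ 2) := by
      simp only [hc_eq]
      exact iSup_negLog_eq (fun x => (g x Q) ^ 2) x₀ fun x =>
        pow_le_pow_left₀ (hgnn x₀ Q hQ0) (hx₀.symm.le.trans (hm_le x Q)) 2
    rw [hLHS]
    -- Q'' = c'^2 is a probability distribution
    set Q'' : Y → ℝ := fun y => c' y ^ 2 with hQ''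
    have hQ''0 : ∀ y, 0 ≤ Q'' y := fun y => sq_nonneg _
    have hQ''1 : ∑ y, Q'' y = 1 := hc'
    obtain ⟨x₃, hx₃⟩ := hm_mem Q''
    have key : (∑ y, Real.sqrt (W x₃ y) * c' y) ^ 2 ≤ (g x₀ Q) ^ 2 := by
      have h1 : |∑ y, Real.sqrt (W x₃ y) * c' y| ≤ g x₃ Q'' := by
        calc |∑ y, Real.sqrt (W x₃ y) * c' y| ≤ ∑ y, |Real.sqrt (W x₃ y) * c' y| :=
              Finset.abs_sum_le_sum_abs _ _
          _ = g x₃ Q'' := by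
              refine Finset.sum_congr rfl fun y _ => ?_
              rw [abs_mul, abs_of_nonneg (Real.sqrt_nonneg _), hQ'']
              rw [Real.sqrt_mul (hW x₃ y), Real.sqrt_sq_eq_abs]
      have h2 : g x₃ Q'' ≤ g x₀ Q := by
        rw [← hx₃, ← hx₀]; exact hQmax Q'' ⟨hQ''0, hQ''1⟩
      calc (∑ y, Real.sqrt (W x₃ y) * c' y) ^ 2
          = |∑ y, Real.sqrt (W x₃ y) * c' y| ^ 2 := (sq_abs _).symm
        _ ≤ (g x₀ Q) ^ 2 := pow_le_pow_left₀ (abs_nonneg _) (h1.trans h2) 2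
    calc negLog ((g x₀ Q) ^ 2) ≤ negLog ((∑ y, Real.sqrt (W x₃ y) * c' y) ^ 2) :=
          negLog_anti_s11 key
      _ ≤ ⨆ x, negLog ((∑ y, Real.sqrt (W x y) * c' y) ^ 2) :=
          le_iSup (fun x => negLog ((∑ y, Real.sqrt (W x y) * c' y) ^ 2)) x₃
  · -- equality of the two objectives
    have hc_eq : ∀ x, (∑ y, Real.sqrt (W x y) * Real.sqrt (Q y)) = g x Q := by
      intro x
      exact Finset.sum_congr rfl fun y _ => (Real.sqrt_mul (hW x y) _).symm
    obtain ⟨x₀, hx₀⟩ := hm_mem Q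
    rw [iSup_two_negLog_eq (fun x => g x Q) x₀ (fun x => hx₀.symm.le.trans (hm_le x Q))]
    have hRHS : (⨆ x, negLog ((∑ y, Real.sqrt (W x y) * Real.sqrt (Q y)) ^ 2))
        = negLog ((g x₀ Q) ^ 2) := by
      simp only [hc_eq]
      exact iSup_negLog_eq (fun x => (g x Q) ^ 2) x₀ fun x =>
        pow_le_pow_left₀ (hgnn x₀ Q hQ0) (hx₀.symm.le.trans (hm_le x Q)) 2
    rw [hRHS, two_mul_negLog (hgnn x₀ Q hQ0)]
end
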